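/- Let θ : T → ℝ, let p_θ be the associated hierarchical probability function, let s : T → ℝ and α ∈ ℝ. Define the induced hyperparameters α(D, i_D) = Σ_{F∈𝒟, F⊇D} Σ_{j_F∈I_F* : (j_F)_D = i_D} (−1)^{|F∖D|} s(F, j_F) for (D, i_D) ∈ T, and α_∅ = α + Σ_{(D,i_D)∈T} (−1)^{|D|} s(D, i_D). Then the conjugate-prior kernel rewrites in terms of cell probabilities: exp( Σ_{(D,i_D)∈T} θ(D, i_D) s(D, i_D) ) · p_θ(i*)^α = ( ∏_{(D,i_D)∈T} p_θ(i_D, i*_{D^c})^{α(D,i_D)} ) · p_θ(i*)^{α_∅}. -/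

import Mathlib

open Finset MeasureTheory

/-- The cell equal to `i` on `F` and to the baseline `b` off `F`. -/
def cellOn {V : Type} [DecidableEq V] {I : V → Type} (b : ∀ γ, I γ)
    (F : Finset V) (i : ∀ γ, I γ) : ∀ γ, I γ :=
  fun γ => if γ ∈ F then i γ else b γ

/-- The support of a cell: the set of coordinates that are off baseline. -/
def cellSupport {V : Type} [Fintype V] [DecidableEq V] {I : V → Type}
    [∀ γ, DecidableEq (I γ)] (b : ∀ γ, I γ) (j : ∀ γ, I γ) : Finset V :=
  Finset.univ.filter (fun γ => j γ ≠ b γ)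

/-- A generating class: a nonempty collection of nonempty subsets of `V` closed
under nonempty subsets. -/
def IsGenClass {V : Type} [DecidableEq V] (𝒟 : Finset (Finset V)) : Prop :=
  𝒟.Nonempty ∧ (∀ D ∈ 𝒟, D ≠ ∅) ∧ ∀ D ∈ 𝒟, ∀ F ⊆ D, F ≠ ∅ → F ∈ 𝒟

/-- The index set `T = {(D, i_D) : D ∈ 𝒟, i_D ∈ I_D*}`; a tuple `i_D ∈ I_D*` is
represented by the unique cell whose support is exactly `D`. -/
def TParam {V : Type} [Fintype V] [DecidableEq V] (I : V → Type)
    [∀ γ, DecidableEq (I γ)] (b : ∀ γ, I γ) (𝒟 : Finset (Finset V)) : Type :=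
  {x : Finset V × (∀ γ, I γ) // x.1 ∈ 𝒟 ∧ cellSupport b x.2 = x.1}

noncomputable instance {V : Type} [Fintype V] [DecidableEq V] (I : V → Type)
    [∀ γ, Fintype (I γ)] [∀ γ, DecidableEq (I γ)] (b : ∀ γ, I γ)
    (𝒟 : Finset (Finset V)) : Fintype (TParam I b 𝒟) := by
  unfold TParam; infer_instance

instance {V : Type} [Fintype V] [DecidableEq V] (I : V → Type)
    [∀ γ, DecidableEq (I γ)] (b : ∀ γ, I γ)
    (𝒟 : Finset (Finset V)) : DecidableEq (TParam I b 𝒟) := by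
  unfold TParam; infer_instance

/-- The exponent `Σ_{F ∈ 𝒟, F ⊆ S(j)} θ(F, j_F)` of the hierarchical model. -/
noncomputable def energy {V : Type} [Fintype V] [DecidableEq V] {I : V → Type}
    [∀ γ, Fintype (I γ)] [∀ γ, DecidableEq (I γ)] (b : ∀ γ, I γ)
    (𝒟 : Finset (Finset V)) (θ : TParam I b 𝒟 → ℝ) (j : ∀ γ, I γ) : ℝ :=
  ∑ t : TParam I b 𝒟, if t.1.2 = cellOn b t.1.1 j then θ t else 0

set_option linter.unusedSectionVars false

section Aux
variable {V : Type} [Fintype V] [DecidableEq V] {I : V → Type}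
  [∀ γ, Fintype (I γ)] [∀ γ, DecidableEq (I γ)] {b : ∀ γ, I γ}
  {𝒟 : Finset (Finset V)}

lemma mem_supp_iff (t : TParam I b 𝒟) (γ : V) : γ ∈ t.1.1 ↔ t.1.2 γ ≠ b γ := by
  conv_lhs => rw [← t.2.2]
  simp [cellSupport]

lemma cond_iff (u t : TParam I b 𝒟) :
    u.1.2 = cellOn b u.1.1 t.1.2 ↔
      (u.1.1 ⊆ t.1.1 ∧ ∀ γ ∈ u.1.1, t.1.2 γ = u.1.2 γ) := by
  constructor
  · intro h
    have hag : ∀ γ ∈ u.1.1, t.1.2 γ = u.1.2 γ := by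
      intro γ hγ
      rw [h]; simp [cellOn, hγ]
    refine ⟨fun γ hγ => ?_, hag⟩
    rw [mem_supp_iff]
    rw [hag γ hγ]
    exact (mem_supp_iff u γ).mp hγ
  · rintro ⟨hsub, hag⟩
    funext γ
    by_cases hγ : γ ∈ u.1.1
    · simp [cellOn, hγ, hag γ hγ]
    · simp only [cellOn, if_neg hγ]
      by_contra hne
      exact hγ ((mem_supp_iff u γ).mpr hne)

lemma energy_eq (θ : TParam I b 𝒟 → ℝ) (t : TParam I b 𝒟) :
    energy b 𝒟 θ t.1.2 =
      ∑ u ∈ Finset.univ.filter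
        (fun u : TParam I b 𝒟 => u.1.1 ⊆ t.1.1 ∧ ∀ γ ∈ u.1.1, t.1.2 γ = u.1.2 γ),
        θ u := by
  rw [Finset.sum_filter, energy]
  exact Finset.sum_congr rfl fun u _ => if_congr (cond_iff u t) rfl rfl

lemma energy_base (h𝒟 : IsGenClass 𝒟) (θ : TParam I b 𝒟 → ℝ) :
    energy b 𝒟 θ b = 0 := by
  rw [energy]
  apply Finset.sum_eq_zero
  intro t _
  rw [if_neg]
  intro h
  have hb : cellOn b t.1.1 b = b := by funext γ; simp [cellOn]
  rw [hb] at h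
  have : t.1.1 = (∅ : Finset V) := by
    rw [← t.2.2, h]; simp [cellSupport]
  exact h𝒟.2.1 t.1.1 t.2.1 this

lemma sum_Icc_neg_one_pow {G F : Finset V} (hGF : G ⊆ F) :
    ∑ D ∈ Finset.Icc G F, (-1 : ℝ) ^ (F \ D).card = if G = F then 1 else 0 := by
  have h1 : ∑ D ∈ Finset.Icc G F, (-1 : ℝ) ^ (F \ D).card
      = ∑ E ∈ (F \ G).powerset, (-1 : ℝ) ^ E.card := by
    refine Finset.sum_nbij' (fun D => F \ D) (fun E => F \ E) ?_ ?_ ?_ ?_ ?_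
    · intro D hD
      rw [Finset.mem_Icc] at hD
      rw [Finset.mem_powerset]
      exact Finset.sdiff_subset_sdiff le_rfl hD.1
    · intro E hE
      rw [Finset.mem_powerset] at hE
      rw [Finset.mem_Icc]
      constructor
      · intro γ hγ
        rw [Finset.mem_sdiff]
        refine ⟨hGF hγ, fun hγE => ?_⟩
        exact ((Finset.mem_sdiff.mp (hE hγE)).2) hγ
      · exact Finset.sdiff_subset
    · intro D hD
      rw [Finset.mem_Icc] at hD
      exact Finset.sdiff_sdiff_eq_self hD.2
    · intro E hE
      rw [Finset.mem_powerset] at hE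
      exact Finset.sdiff_sdiff_eq_self (hE.trans Finset.sdiff_subset)
    · intro D _; rfl
  rw [h1]
  have h2 : (∑ E ∈ (F \ G).powerset, (-1 : ℝ) ^ E.card)
      = ((∑ E ∈ (F \ G).powerset, (-1 : ℤ) ^ E.card : ℤ) : ℝ) := by push_cast; rfl
  rw [h2, Finset.sum_powerset_neg_one_pow_card]
  have h3 : F \ G = ∅ ↔ G = F := by
    rw [Finset.sdiff_eq_empty_iff_subset]
    exact ⟨fun h => le_antisymm hGF h, fun h => h ▸ le_rfl⟩
  by_cases h : G = F
  · rw [if_pos (h3.mpr h), if_pos h]; norm_num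
  · rw [if_neg (fun c => h (h3.mp c)), if_neg h]; norm_num


lemma alt_sum_inner (h𝒟 : IsGenClass 𝒟) (t' : TParam I b 𝒟) (G : Finset V)
    (hGF : G ⊆ t'.1.1) :
    ∑ t ∈ Finset.univ.filter
      (fun t : TParam I b 𝒟 =>
        G ⊆ t.1.1 ∧ t.1.1 ⊆ t'.1.1 ∧ ∀ γ ∈ t.1.1, t'.1.2 γ = t.1.2 γ),
      (-1 : ℝ) ^ (t'.1.1 \ t.1.1).card
    = (if G = t'.1.1 then 1 else 0)
      - (if G = ∅ then (-1 : ℝ) ^ t'.1.1.card else 0) := by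
  have hF : t'.1.1 ≠ ∅ := h𝒟.2.1 _ t'.2.1
  have key : ∑ t ∈ Finset.univ.filter
      (fun t : TParam I b 𝒟 =>
        G ⊆ t.1.1 ∧ t.1.1 ⊆ t'.1.1 ∧ ∀ γ ∈ t.1.1, t'.1.2 γ = t.1.2 γ),
      (-1 : ℝ) ^ (t'.1.1 \ t.1.1).card
      = ∑ D ∈ (Finset.Icc G t'.1.1).erase ∅, (-1 : ℝ) ^ (t'.1.1 \ D).card := by
    have hsupp : ∀ D : Finset V, D ⊆ t'.1.1 →
        cellSupport b (cellOn b D t'.1.2) = D := by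
      intro D hD
      ext γ
      simp only [cellSupport, cellOn, Finset.mem_filter, Finset.mem_univ, true_and]
      by_cases hγ : γ ∈ D
      · simp only [if_pos hγ, hγ, iff_true]
        exact (mem_supp_iff t' γ).mp (hD hγ)
      · simp [if_neg hγ, hγ]
    refine Finset.sum_nbij' (fun t => t.1.1)
      (fun D => if hD : D ∈ (Finset.Icc G t'.1.1).erase ∅ then
        (⟨(D, cellOn b D t'.1.2),
          h𝒟.2.2 t'.1.1 t'.2.1 D (Finset.mem_Icc.mp (Finset.mem_of_mem_erase hD)).2
            (Finset.ne_of_mem_erase hD),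
          hsupp D (Finset.mem_Icc.mp (Finset.mem_of_mem_erase hD)).2⟩ : TParam I b 𝒟)
        else t') ?_ ?_ ?_ ?_ ?_
    · intro t ht
      rw [Finset.mem_filter] at ht
      refine Finset.mem_erase.mpr ⟨h𝒟.2.1 _ t.2.1, Finset.mem_Icc.mpr ⟨ht.2.1, ht.2.2.1⟩⟩
    · intro D hD
      erw [dif_pos hD]
      erw [Finset.mem_filter]
      obtain ⟨hGD, hDF⟩ := Finset.mem_Icc.mp (Finset.mem_of_mem_erase hD)
      exact ⟨Finset.mem_univ _, hGD, hDF, fun γ hγ => by simp [cellOn, hγ]⟩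
    · intro t ht
      rw [Finset.mem_filter] at ht
      have hD : t.1.1 ∈ (Finset.Icc G t'.1.1).erase ∅ :=
        Finset.mem_erase.mpr ⟨h𝒟.2.1 _ t.2.1, Finset.mem_Icc.mpr ⟨ht.2.1, ht.2.2.1⟩⟩
      erw [dif_pos hD]
      have hcell : cellOn b t.1.1 t'.1.2 = t.1.2 := by
        funext γ
        by_cases hγ : γ ∈ t.1.1
        · simpa [cellOn, hγ] using ht.2.2.2 γ hγ
        · simp only [cellOn, if_neg hγ]
          by_contra hne
          exact hγ ((mem_supp_iff t γ).mpr (fun c => hne c.symm))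
      exact Subtype.ext (Prod.ext_iff.mpr ⟨rfl, hcell⟩)
    · intro D hD
      erw [dif_pos hD]
    · intro t _; rfl
  rw [key]
  by_cases hG : G = ∅
  · subst hG
    have hmem : (∅ : Finset V) ∈ Finset.Icc (∅ : Finset V) t'.1.1 :=
      Finset.mem_Icc.mpr ⟨le_rfl, Finset.empty_subset _⟩
    rw [Finset.sum_erase_eq_sub hmem, sum_Icc_neg_one_pow (Finset.empty_subset _),
      if_pos rfl, Finset.sdiff_empty]
  · have hmem : (∅ : Finset V) ∉ Finset.Icc G t'.1.1 := by
      intro c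
      exact hG (Finset.subset_empty.mp (Finset.mem_Icc.mp c).1)
    rw [Finset.erase_eq_of_notMem hmem, sum_Icc_neg_one_pow hGF, if_neg hG]
    ring


lemma eq_of_parts (t'' t' : TParam I b 𝒟)
    (h : t''.1.1 ⊆ t'.1.1 ∧ ∀ γ ∈ t''.1.1, t'.1.2 γ = t''.1.2 γ)
    (heq : t''.1.1 = t'.1.1) : t'' = t' := by
  refine Subtype.ext (Prod.ext_iff.mpr ⟨heq, funext fun γ => ?_⟩)
  by_cases hγ : γ ∈ t''.1.1
  · exact (h.2 γ hγ).symm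
  · have h1 : t''.1.2 γ = b γ := by
      by_contra hne
      exact hγ ((mem_supp_iff t'' γ).mpr hne)
    have h2 : t'.1.2 γ = b γ := by
      by_contra hne
      exact hγ (heq ▸ (mem_supp_iff t' γ).mpr hne)
    rw [h1, h2]

lemma sum_between (h𝒟 : IsGenClass 𝒟) (t'' t' : TParam I b 𝒟) :
    ∑ t ∈ Finset.univ.filter (fun t : TParam I b 𝒟 =>
        (t''.1.1 ⊆ t.1.1 ∧ ∀ γ ∈ t''.1.1, t.1.2 γ = t''.1.2 γ) ∧
        (t.1.1 ⊆ t'.1.1 ∧ ∀ γ ∈ t.1.1, t'.1.2 γ = t.1.2 γ)),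
      (-1 : ℝ) ^ (t'.1.1 \ t.1.1).card = if t'' = t' then 1 else 0 := by
  by_cases h : t''.1.1 ⊆ t'.1.1 ∧ ∀ γ ∈ t''.1.1, t'.1.2 γ = t''.1.2 γ
  · have hiff : ∀ t ∈ (Finset.univ : Finset (TParam I b 𝒟)),
        (((t''.1.1 ⊆ t.1.1 ∧ ∀ γ ∈ t''.1.1, t.1.2 γ = t''.1.2 γ) ∧
          (t.1.1 ⊆ t'.1.1 ∧ ∀ γ ∈ t.1.1, t'.1.2 γ = t.1.2 γ))
        ↔ (t''.1.1 ⊆ t.1.1 ∧ t.1.1 ⊆ t'.1.1 ∧ ∀ γ ∈ t.1.1, t'.1.2 γ = t.1.2 γ)) := by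
      intro t _
      constructor
      · rintro ⟨⟨h1, _⟩, h3, h4⟩; exact ⟨h1, h3, h4⟩
      · rintro ⟨h1, h2, h3⟩
        exact ⟨⟨h1, fun γ hγ => (h3 γ (h1 hγ)).symm.trans (h.2 γ hγ)⟩, h2, h3⟩
    rw [Finset.filter_congr hiff, alt_sum_inner h𝒟 t' t''.1.1 h.1,
      if_neg (h𝒟.2.1 _ t''.2.1), sub_zero]
    exact if_congr ⟨fun c => eq_of_parts t'' t' h c, fun c => by rw [c]⟩ rfl rfl
  · rw [Finset.filter_false_of_mem, Finset.sum_empty, if_neg]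
    · rintro rfl
      exact h ⟨Finset.Subset.refl _, fun γ _ => rfl⟩
    · rintro t _ ⟨⟨h1, h2⟩, h3, h4⟩
      exact h ⟨h1.trans h3, fun γ hγ => (h4 γ (h1 hγ)).trans (h2 γ hγ)⟩

lemma sum_below (h𝒟 : IsGenClass 𝒟) (t' : TParam I b 𝒟) :
    ∑ t ∈ Finset.univ.filter (fun t : TParam I b 𝒟 =>
        t.1.1 ⊆ t'.1.1 ∧ ∀ γ ∈ t.1.1, t'.1.2 γ = t.1.2 γ),
      (-1 : ℝ) ^ (t'.1.1 \ t.1.1).card = -(-1 : ℝ) ^ t'.1.1.card := by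
  have hiff : ∀ t ∈ (Finset.univ : Finset (TParam I b 𝒟)),
      ((t.1.1 ⊆ t'.1.1 ∧ ∀ γ ∈ t.1.1, t'.1.2 γ = t.1.2 γ)
      ↔ ((∅ : Finset V) ⊆ t.1.1 ∧ t.1.1 ⊆ t'.1.1 ∧ ∀ γ ∈ t.1.1, t'.1.2 γ = t.1.2 γ)) := by
    intro t _
    simp [Finset.empty_subset]
  rw [Finset.filter_congr hiff, alt_sum_inner h𝒟 t' ∅ (Finset.empty_subset _),
    if_neg (fun c => h𝒟.2.1 _ t'.2.1 c.symm), if_pos rfl]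
  ring


lemma sum1 (h𝒟 : IsGenClass 𝒟) (θ s : TParam I b 𝒟 → ℝ) :
    ∑ t : TParam I b 𝒟,
      (∑ t' ∈ Finset.univ.filter (fun t' : TParam I b 𝒟 =>
          t.1.1 ⊆ t'.1.1 ∧ ∀ γ ∈ t.1.1, t'.1.2 γ = t.1.2 γ),
        (-1 : ℝ) ^ (t'.1.1 \ t.1.1).card * s t') * energy b 𝒟 θ t.1.2
    = ∑ t : TParam I b 𝒟, θ t * s t := by
  have step1 : ∀ t : TParam I b 𝒟,
      (∑ t' ∈ Finset.univ.filter (fun t' : TParam I b 𝒟 =>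
          t.1.1 ⊆ t'.1.1 ∧ ∀ γ ∈ t.1.1, t'.1.2 γ = t.1.2 γ),
        (-1 : ℝ) ^ (t'.1.1 \ t.1.1).card * s t') * energy b 𝒟 θ t.1.2
      = ∑ t' : TParam I b 𝒟, ∑ u : TParam I b 𝒟,
          if ((u.1.1 ⊆ t.1.1 ∧ ∀ γ ∈ u.1.1, t.1.2 γ = u.1.2 γ) ∧
              (t.1.1 ⊆ t'.1.1 ∧ ∀ γ ∈ t.1.1, t'.1.2 γ = t.1.2 γ))
          then (-1 : ℝ) ^ (t'.1.1 \ t.1.1).card * (s t' * θ u) else 0 := by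
    intro t
    rw [energy_eq θ t, Finset.sum_filter, Finset.sum_filter, Finset.sum_mul_sum]
    refine Finset.sum_congr rfl fun t' _ => Finset.sum_congr rfl fun u _ => ?_
    by_cases h1 : (t.1.1 ⊆ t'.1.1 ∧ ∀ γ ∈ t.1.1, t'.1.2 γ = t.1.2 γ) <;>
      by_cases h2 : (u.1.1 ⊆ t.1.1 ∧ ∀ γ ∈ u.1.1, t.1.2 γ = u.1.2 γ) <;>
      simp [h1, h2, ite_and] <;> ring
  calc ∑ t : TParam I b 𝒟,
      (∑ t' ∈ Finset.univ.filter (fun t' : TParam I b 𝒟 =>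
          t.1.1 ⊆ t'.1.1 ∧ ∀ γ ∈ t.1.1, t'.1.2 γ = t.1.2 γ),
        (-1 : ℝ) ^ (t'.1.1 \ t.1.1).card * s t') * energy b 𝒟 θ t.1.2
      = ∑ t : TParam I b 𝒟, ∑ t' : TParam I b 𝒟, ∑ u : TParam I b 𝒟,
          if ((u.1.1 ⊆ t.1.1 ∧ ∀ γ ∈ u.1.1, t.1.2 γ = u.1.2 γ) ∧
              (t.1.1 ⊆ t'.1.1 ∧ ∀ γ ∈ t.1.1, t'.1.2 γ = t.1.2 γ))
          then (-1 : ℝ) ^ (t'.1.1 \ t.1.1).card * (s t' * θ u) else 0 :=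
      Finset.sum_congr rfl fun t _ => step1 t
    _ = ∑ t' : TParam I b 𝒟, ∑ u : TParam I b 𝒟, ∑ t : TParam I b 𝒟,
          if ((u.1.1 ⊆ t.1.1 ∧ ∀ γ ∈ u.1.1, t.1.2 γ = u.1.2 γ) ∧
              (t.1.1 ⊆ t'.1.1 ∧ ∀ γ ∈ t.1.1, t'.1.2 γ = t.1.2 γ))
          then (-1 : ℝ) ^ (t'.1.1 \ t.1.1).card * (s t' * θ u) else 0 := by
      rw [Finset.sum_comm]
      exact Finset.sum_congr rfl fun t' _ => Finset.sum_comm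
    _ = ∑ t' : TParam I b 𝒟, ∑ u : TParam I b 𝒟,
          (if u = t' then (1 : ℝ) else 0) * (s t' * θ u) := by
      refine Finset.sum_congr rfl fun t' _ => Finset.sum_congr rfl fun u _ => ?_
      rw [← sum_between h𝒟 u t', Finset.sum_filter, Finset.sum_mul]
      refine Finset.sum_congr rfl fun t _ => ?_
      rw [ite_mul, zero_mul]
    _ = ∑ t' : TParam I b 𝒟, s t' * θ t' := by
      refine Finset.sum_congr rfl fun t' _ => ?_
      simp only [ite_mul, one_mul, zero_mul]
      simp
    _ = ∑ t : TParam I b 𝒟, θ t * s t :=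
      Finset.sum_congr rfl fun t _ => mul_comm _ _

lemma sum2 (h𝒟 : IsGenClass 𝒟) (s : TParam I b 𝒟 → ℝ) :
    ∑ t : TParam I b 𝒟,
      ∑ t' ∈ Finset.univ.filter (fun t' : TParam I b 𝒟 =>
          t.1.1 ⊆ t'.1.1 ∧ ∀ γ ∈ t.1.1, t'.1.2 γ = t.1.2 γ),
        (-1 : ℝ) ^ (t'.1.1 \ t.1.1).card * s t'
    = - ∑ t : TParam I b 𝒟, (-1 : ℝ) ^ t.1.1.card * s t := by
  calc ∑ t : TParam I b 𝒟,
      ∑ t' ∈ Finset.univ.filter (fun t' : TParam I b 𝒟 =>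
          t.1.1 ⊆ t'.1.1 ∧ ∀ γ ∈ t.1.1, t'.1.2 γ = t.1.2 γ),
        (-1 : ℝ) ^ (t'.1.1 \ t.1.1).card * s t'
      = ∑ t : TParam I b 𝒟, ∑ t' : TParam I b 𝒟,
          if (t.1.1 ⊆ t'.1.1 ∧ ∀ γ ∈ t.1.1, t'.1.2 γ = t.1.2 γ)
          then (-1 : ℝ) ^ (t'.1.1 \ t.1.1).card * s t' else 0 :=
      Finset.sum_congr rfl fun t _ => Finset.sum_filter _ _
    _ = ∑ t' : TParam I b 𝒟, ∑ t : TParam I b 𝒟,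
          if (t.1.1 ⊆ t'.1.1 ∧ ∀ γ ∈ t.1.1, t'.1.2 γ = t.1.2 γ)
          then (-1 : ℝ) ^ (t'.1.1 \ t.1.1).card * s t' else 0 := Finset.sum_comm
    _ = ∑ t' : TParam I b 𝒟, (-(-1 : ℝ) ^ t'.1.1.card) * s t' := by
      refine Finset.sum_congr rfl fun t' _ => ?_
      rw [← sum_below h𝒟 t', Finset.sum_filter, Finset.sum_mul]
      refine Finset.sum_congr rfl fun t _ => ?_
      rw [ite_mul, zero_mul]
    _ = - ∑ t : TParam I b 𝒟, (-1 : ℝ) ^ t.1.1.card * s t := by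
      rw [← Finset.sum_neg_distrib]
      exact Finset.sum_congr rfl fun t _ => by ring

end Aux

/-- The partition function `Z(θ)`. -/
noncomputable def Zfun {V : Type} [Fintype V] [DecidableEq V] {I : V → Type}
    [∀ γ, Fintype (I γ)] [∀ γ, DecidableEq (I γ)] (b : ∀ γ, I γ)
    (𝒟 : Finset (Finset V)) (θ : TParam I b 𝒟 → ℝ) : ℝ :=
  ∑ j : (∀ γ, I γ), Real.exp (energy b 𝒟 θ j)

/-- The log-partition function `k(θ) = log Z(θ)`. -/
noncomputable def kfun {V : Type} [Fintype V] [DecidableEq V] {I : V → Type}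
    [∀ γ, Fintype (I γ)] [∀ γ, DecidableEq (I γ)] (b : ∀ γ, I γ)
    (𝒟 : Finset (Finset V)) (θ : TParam I b 𝒟 → ℝ) : ℝ :=
  Real.log (Zfun b 𝒟 θ)

/-- The hierarchical log-linear probability function `p_θ`. -/
noncomputable def phier {V : Type} [Fintype V] [DecidableEq V] {I : V → Type}
    [∀ γ, Fintype (I γ)] [∀ γ, DecidableEq (I γ)] (b : ∀ γ, I γ)
    (𝒟 : Finset (Finset V)) (θ : TParam I b 𝒟 → ℝ) (j : ∀ γ, I γ) : ℝ :=
  Real.exp (energy b 𝒟 θ j) / Zfun b 𝒟 θ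

/-- The conjugate-prior kernel rewritten in terms of cell probabilities:
`exp(Σ_t θ(t) s(t)) · p_θ(i*)^α = (∏_{(D,i_D)∈T} p_θ(i(D))^{α(D,i_D)}) · p_θ(i*)^{α_∅}`,
where `α(D,i_D) = Σ_{F∈𝒟,F⊇D} Σ_{j_F∈I_F*:(j_F)_D=i_D} (−1)^{|F∖D|} s(F,j_F)` and
`α_∅ = α + Σ_{(D,i_D)∈T} (−1)^{|D|} s(D,i_D)`. -/
theorem prior_kernel_in_cellProbs {V : Type} [Fintype V] [DecidableEq V]
    {I : V → Type} [∀ γ, Fintype (I γ)] [∀ γ, DecidableEq (I γ)]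
    (b : ∀ γ, I γ) (𝒟 : Finset (Finset V)) (h𝒟 : IsGenClass 𝒟)
    (θ s : TParam I b 𝒟 → ℝ) (α : ℝ) :
    Real.exp (∑ t : TParam I b 𝒟, θ t * s t) * phier b 𝒟 θ b ^ α =
      (∏ t : TParam I b 𝒟,
        phier b 𝒟 θ t.1.2 ^
          (∑ t' ∈ Finset.univ.filter
              (fun t' : TParam I b 𝒟 =>
                t.1.1 ⊆ t'.1.1 ∧ ∀ γ ∈ t.1.1, t'.1.2 γ = t.1.2 γ),
            (-1 : ℝ) ^ (t'.1.1 \ t.1.1).card * s t')) *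
      phier b 𝒟 θ b ^ (α + ∑ t : TParam I b 𝒟, (-1 : ℝ) ^ t.1.1.card * s t) := by
  have hZ : 0 < Zfun b 𝒟 θ :=
    Finset.sum_pos (fun j _ => Real.exp_pos _) ⟨b, Finset.mem_univ b⟩
  have hrpow : ∀ (j : ∀ γ, I γ) (a : ℝ),
      phier b 𝒟 θ j ^ a
        = Real.exp ((energy b 𝒟 θ j - Real.log (Zfun b 𝒟 θ)) * a) := by
    intro j a
    have hp : phier b 𝒟 θ j
        = Real.exp (energy b 𝒟 θ j - Real.log (Zfun b 𝒟 θ)) := by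
      rw [phier, Real.exp_sub, Real.exp_log hZ]
    rw [hp, Real.rpow_def_of_pos (Real.exp_pos _), Real.log_exp]
  simp only [hrpow]
  rw [← Real.exp_sum, ← Real.exp_add, ← Real.exp_add]
  congr 1
  rw [energy_base h𝒟 θ]
  have h1 := sum1 h𝒟 θ s
  have h2 := sum2 h𝒟 s
  set L := Real.log (Zfun b 𝒟 θ) with hLdef
  set A : TParam I b 𝒟 → ℝ := fun t =>
    ∑ t' ∈ Finset.univ.filter
        (fun t' : TParam I b 𝒟 =>
          t.1.1 ⊆ t'.1.1 ∧ ∀ γ ∈ t.1.1, t'.1.2 γ = t.1.2 γ),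
      (-1 : ℝ) ^ (t'.1.1 \ t.1.1).card * s t' with hAdef
  have expand : ∑ t : TParam I b 𝒟, (energy b 𝒟 θ t.1.2 - L) * A t
      = (∑ t : TParam I b 𝒟, A t * energy b 𝒟 θ t.1.2) - L * ∑ t : TParam I b 𝒟, A t := by
    rw [Finset.mul_sum, ← Finset.sum_sub_distrib]
    exact Finset.sum_congr rfl fun t _ => by ring
  rw [expand, h1, h2]
  ring
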